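/- arXiv:2602.07178 — 5 statements merged into one kernel-verified Lean document; each statement's English description precedes it below -/
import Mathlib

section
/- For fixed positive constants α, K, D, H, g, the equation (αK/D) + (gH/α) + (gH/D)·a = (gH/α)·e^{αa/D} has a unique positive solution a. -/
set_option maxHeartbeats 1000000 in
theorem stmt_0 (α K D H g : ℝ) (hα : 0 < α) (hK : 0 < K) (hD : 0 < D) (hH : 0 < H)
    (hg : 0 < g) :
    ∃! a : ℝ, 0 < a ∧
      α * K / D + g * H / α + g * H / D * a = g * H / α * Real.exp (α * a / D) := by
  set F : ℝ → ℝ := fun a => g * H / α * Real.exp (α * a / D) - g * H / D * a with hF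
  set c : ℝ := α * K / D + g * H / α with hc
  have hgHα : 0 < g * H / α := by positivity
  have hgHD : 0 < g * H / D := by positivity
  -- strict monotonicity on [0, ∞)
  have mono : ∀ a b : ℝ, 0 ≤ a → a < b → F a < F b := by
    intro a b ha hab
    have hd : 0 < α * (b - a) / D := by
      have : 0 < b - a := by linarith
      positivity
    have h1 : Real.exp (α * b / D) = Real.exp (α * a / D) * Real.exp (α * (b - a) / D) := by
      rw [← Real.exp_add]; ring_nf
    have h2 : α * (b - a) / D + 1 < Real.exp (α * (b - a) / D) :=
      Real.add_one_lt_exp (ne_of_gt hd)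
    have h3 : 1 ≤ Real.exp (α * a / D) := Real.one_le_exp (by positivity)
    have key : α * (b - a) / D < Real.exp (α * b / D) - Real.exp (α * a / D) := by
      rw [h1]
      nlinarith [Real.exp_pos (α * a / D)]
    have : g * H / D * (b - a) < g * H / α * (Real.exp (α * b / D) - Real.exp (α * a / D)) := by
      have h4 : g * H / α * (α * (b - a) / D) = g * H / D * (b - a) := by
        field_simp
      calc g * H / D * (b - a) = g * H / α * (α * (b - a) / D) := h4.symm
        _ < _ := by exact (mul_lt_mul_iff_right₀ hgHα).mpr key
    simp only [hF]
    nlinarith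
  -- continuity
  have hcont : Continuous F := by
    apply Continuous.sub
    · exact continuous_const.mul (Real.continuous_exp.comp (by continuity))
    · continuity
  -- value at 0
  have hF0 : F 0 = g * H / α := by simp [hF]
  have hF0c : F 0 < c := by
    have hpos : 0 < α * K / D := by positivity
    rw [hF0, hc]; linarith
  -- a point where F is large
  set C : ℝ := α ^ 2 * K / (D * (g * H)) with hCdef
  have hC : 0 ≤ C := by positivity
  set x : ℝ := 2 * Real.sqrt C + 1 with hx
  have hsq : Real.sqrt C ^ 2 = C := Real.sq_sqrt hC
  have hsnn : 0 ≤ Real.sqrt C := Real.sqrt_nonneg C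
  have hxpos : 0 < x := by rw [hx]; linarith
  set b : ℝ := D * x / α with hb
  have hbpos : 0 < b := by rw [hb]; positivity
  have hxb : α * b / D = x := by rw [hb]; field_simp
  -- exp x ≥ 1 + x + x^2/4
  have hexp : 1 + x + x ^ 2 / 4 ≤ Real.exp x := by
    have h1 : x / 2 + 1 ≤ Real.exp (x / 2) := Real.add_one_le_exp (x / 2)
    have h2 : Real.exp (x / 2) * Real.exp (x / 2) = Real.exp x := by
      rw [← Real.exp_add]; ring_nf
    nlinarith [Real.exp_pos (x / 2)]
  have hFb : c ≤ F b := by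
    simp only [hF, hxb]
    have hlin : g * H / D * b = g * H / α * x := by rw [hb]; field_simp
    rw [hlin, hc]
    have hxx : C ≤ x ^ 2 / 4 := by
      rw [hx]; nlinarith
    have hCeq : g * H / α * C = α * K / D := by
      rw [hCdef]; field_simp
    have : α * K / D ≤ g * H / α * (Real.exp x - x - 1) := by
      rw [← hCeq]
      apply mul_le_mul_of_nonneg_left _ (le_of_lt hgHα)
      linarith
    have hexpand : g * H / α * (Real.exp x - x - 1)
        = g * H / α * Real.exp x - g * H / α * x - g * H / α := by ring
    linarith
  -- IVT
  obtain ⟨a, haI, haF⟩ := intermediate_value_Icc (le_of_lt hbpos) hcont.continuousOn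
    (Set.mem_Icc.mpr ⟨le_of_lt hF0c, hFb⟩)
  have hapos : 0 < a := by
    rcases lt_or_eq_of_le haI.1 with h | h
    · exact h
    · exfalso; rw [← h] at haF; rw [haF] at hF0c; exact lt_irrefl c hF0c
  have heqv : ∀ y : ℝ, (α * K / D + g * H / α + g * H / D * y
      = g * H / α * Real.exp (α * y / D)) ↔ F y = c := by
    intro y; simp only [hF, hc]; constructor <;> intro h <;> linarith
  refine ⟨a, ⟨hapos, (heqv a).mpr haF⟩, ?_⟩
  rintro y ⟨hy, hyeq⟩
  have hyF : F y = c := (heqv y).mp hyeq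
  rcases lt_trichotomy y a with h | h | h
  · exfalso
    have := mono y a (le_of_lt hy) h
    rw [hyF, haF] at this; exact lt_irrefl c this
  · exact h
  · exfalso
    have := mono a y (le_of_lt hapos) h
    rw [hyF, haF] at this; exact lt_irrefl c this
end

section
/- For fixed positive constants α, K, D, H, and for g > 0 with a_g defined implicitly by (αK/D) + (gH/α) + (gH/D)·a_g = (gH/α)·e^{αa_g/D} with a_g > 0, the derivative of a_g with respect to g equals −αK/(g²H(e^{αa_g/D} − 1)), which is strictly negative; hence g ↦ a_g is strictly decreasing. -/
open Real Set Filter Topology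

theorem stmt_8 (α K D H : ℝ) (hα : 0 < α) (hK : 0 < K) (hD : 0 < D) (hH : 0 < H)
    (a : ℝ → ℝ)
    (ha : ∀ g : ℝ, 0 < g → 0 < a g ∧
      α * K / D + g * H / α + g * H / D * a g = g * H / α * Real.exp (α * a g / D)) :
    (∀ g : ℝ, 0 < g →
      HasDerivAt a (-(α * K / (g ^ 2 * H * (Real.exp (α * a g / D) - 1)))) g ∧
      -(α * K / (g ^ 2 * H * (Real.exp (α * a g / D) - 1))) < 0) ∧
    StrictAntiOn a (Set.Ioi 0) := by
  have hαne := hα.ne'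
  have hDne := hD.ne'
  have hHne := hH.ne'
  have hKne := hK.ne'
  set ψ : ℝ → ℝ := fun x => H / α * Real.exp (α * x / D) - H / D * x - H / α with hψdef
  -- derivative of ψ
  have hψd : ∀ x : ℝ, HasDerivAt ψ (H / D * (Real.exp (α * x / D) - 1)) x := by
    intro x
    have h1 : HasDerivAt (fun x : ℝ => α * x / D) (α / D) x := by
      simpa using ((hasDerivAt_id x).const_mul α).div_const D
    have h2 := h1.exp
    have h3 := h2.const_mul (H / α)
    have h4 := (h3.sub (((hasDerivAt_id x).const_mul (H / D)))).sub_const (H / α)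
    refine h4.congr_deriv ?_
    field_simp
  have hψ0 : ψ 0 = 0 := by simp [hψdef]
  -- ψ strictly monotone on Ici 0
  have hmono : StrictMonoOn ψ (Ici 0) := by
    apply strictMonoOn_of_deriv_pos (convex_Ici 0)
    · exact fun x _ => (hψd x).continuousAt.continuousWithinAt
    · intro x hx
      rw [interior_Ici] at hx
      rw [(hψd x).deriv]
      have hx0 : (0:ℝ) < x := hx
      have : 1 < Real.exp (α * x / D) := Real.one_lt_exp_iff.2 (by positivity)
      have := sub_pos.2 this
      positivity
  -- key identity
  have hkey : ∀ y : ℝ, 0 < y → ψ (a y) = α * K / (D * y) := by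
    intro y hy
    have h := (ha y hy).2
    have hyne := hy.ne'
    simp only [hψdef]
    field_simp
    field_simp at h
    nlinarith [h]
  have hapos : ∀ y : ℝ, 0 < y → 0 < a y := fun y hy => (ha y hy).1
  -- strict antitonicity
  have hanti : StrictAntiOn a (Set.Ioi 0) := by
    intro x hx y hy hxy
    rw [mem_Ioi] at hx hy
    have h1 := hkey x hx
    have h2 := hkey y hy
    have hax := (hapos x hx).le
    have hay := (hapos y hy).le
    rw [← hmono.lt_iff_lt (mem_Ici.2 hay) (mem_Ici.2 hax), h1, h2]
    apply div_lt_div_of_pos_left (by positivity) (by positivity)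
    exact (mul_lt_mul_iff_right₀ hD).2 hxy
  refine ⟨?_, hanti⟩
  intro g hg
  have hgne := hg.ne'
  have hag := hapos g hg
  have hE : 1 < Real.exp (α * a g / D) := Real.one_lt_exp_iff.2 (by positivity)
  have hE1 : 0 < Real.exp (α * a g / D) - 1 := sub_pos.2 hE
  have hneg : -(α * K / (g ^ 2 * H * (Real.exp (α * a g / D) - 1))) < 0 := by
    rw [neg_lt_zero]
    positivity
  have hψag : ψ (a g) = α * K / (D * g) := hkey g hg
  -- continuity of a at g
  have hcont : ContinuousAt a g := by
    rw [ContinuousAt, Metric.tendsto_nhds]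
    intro ε hε
    set l : ℝ := max (a g - ε) (a g / 2) with hl
    have hl0 : 0 < l := lt_of_lt_of_le (by linarith) (le_max_right _ _)
    have hllt : l < a g := max_lt (by linarith) (by linarith)
    have hult : a g < a g + ε := by linarith
    have hψl0 : 0 < ψ l := by
      rw [← hψ0]
      exact hmono (mem_Ici.2 le_rfl) (mem_Ici.2 hl0.le) hl0
    have hψlu : ψ l < ψ (a g) :=
      hmono (mem_Ici.2 hl0.le) (mem_Ici.2 hag.le) hllt
    have hψgu : ψ (a g) < ψ (a g + ε) :=
      hmono (mem_Ici.2 hag.le) (mem_Ici.2 (by linarith)) hult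
    have hψag0 : 0 < ψ (a g) := hψl0.trans hψlu
    have hψu0 : 0 < ψ (a g + ε) := hψag0.trans hψgu
    have hgeq : g = α * K / (D * ψ (a g)) := by
      rw [hψag]; field_simp
    have hp : α * K / (D * ψ (a g + ε)) < g := by
      calc α * K / (D * ψ (a g + ε)) < α * K / (D * ψ (a g)) := by
            apply div_lt_div_of_pos_left (by positivity) (by positivity)
            exact (mul_lt_mul_iff_right₀ hD).2 hψgu
        _ = g := hgeq.symm
    have hq : g < α * K / (D * ψ l) := by
      calc g = α * K / (D * ψ (a g)) := hgeq
        _ < α * K / (D * ψ l) := by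
            apply div_lt_div_of_pos_left (by positivity) (by positivity)
            exact (mul_lt_mul_iff_right₀ hD).2 hψlu
    filter_upwards [Ioo_mem_nhds hp hq] with y hy
    obtain ⟨hy1, hy2⟩ := hy
    have hy0 : 0 < y := lt_trans (by positivity) hy1
    have hψay : ψ (a y) = α * K / (D * y) := hkey y hy0
    have hay := hapos y hy0
    -- a y < a g + ε
    have h1 : ψ (a y) < ψ (a g + ε) := by
      rw [hψay]
      calc α * K / (D * y) < α * K / (D * (α * K / (D * ψ (a g + ε)))) := by
            apply div_lt_div_of_pos_left (by positivity) (by positivity)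
            exact (mul_lt_mul_iff_right₀ hD).2 hy1
        _ = ψ (a g + ε) := by field_simp
    have hlt1 : a y < a g + ε := by
      rw [← hmono.lt_iff_lt (mem_Ici.2 hay.le) (mem_Ici.2 (by linarith))]
      exact h1
    -- l < a y
    have h2 : ψ l < ψ (a y) := by
      rw [hψay]
      calc ψ l = α * K / (D * (α * K / (D * ψ l))) := by field_simp
        _ < α * K / (D * y) := by
            apply div_lt_div_of_pos_left (by positivity) (by positivity)
            exact (mul_lt_mul_iff_right₀ hD).2 hy2
    have hlt2 : l < a y := by
      rw [← hmono.lt_iff_lt (mem_Ici.2 hl0.le) (mem_Ici.2 hay.le)]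
      exact h2
    have hlt3 : a g - ε < a y := lt_of_le_of_lt (le_max_left _ _) hlt2
    rw [Real.dist_eq, abs_lt]
    constructor <;> linarith
  -- the inverse function f
  set f : ℝ → ℝ := fun x => α * K / (D * ψ x) with hfdef
  have hdenne : D * ψ (a g) ≠ 0 := by
    rw [hψag]
    positivity
  have hfd : HasDerivAt f
      ((0 * (D * ψ (a g)) - α * K * (D * (H / D * (Real.exp (α * a g / D) - 1)))) /
        (D * ψ (a g)) ^ 2) (a g) :=
    (hasDerivAt_const (a g) (α * K)).div ((hψd (a g)).const_mul D) hdenne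
  have hf'eq : (0 * (D * ψ (a g)) - α * K * (D * (H / D * (Real.exp (α * a g / D) - 1)))) /
        (D * ψ (a g)) ^ 2 = -(H * (Real.exp (α * a g / D) - 1) * g ^ 2 / (α * K)) := by
    rw [hψag]
    field_simp
    ring
  rw [hf'eq] at hfd
  have hf'ne : -(H * (Real.exp (α * a g / D) - 1) * g ^ 2 / (α * K)) ≠ 0 := by
    have : 0 < H * (Real.exp (α * a g / D) - 1) * g ^ 2 / (α * K) := by positivity
    linarith
  have hfg : ∀ᶠ y in 𝓝 g, f (a y) = y := by
    filter_upwards [Ioi_mem_nhds hg] with y hy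
    rw [mem_Ioi] at hy
    have := hkey y hy
    simp only [hfdef, this]
    field_simp
  have hda := HasDerivAt.of_local_left_inverse hcont hfd hf'ne hfg
  refine ⟨?_, hneg⟩
  refine hda.congr_deriv ?_
  symm
  rw [inv_neg, neg_inj, eq_comm, inv_eq_iff_eq_inv, eq_comm]
  rw [eq_div_iff (by positivity)]
  field_simp
end

section
/- With a_g the unique positive solution of (αK/D) + (gH/α) + (gH/D)·a = (gH/α)·e^{αa/D}, the product g·a_g is strictly increasing in g, tends to 0 as g → 0⁺, and tends to ∞ as g → ∞. -/
open Real Filter Set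

private lemma F_hasDeriv (x : ℝ) :
    HasDerivAt (fun t : ℝ => Real.exp t - 1 - t) (Real.exp x - 1) x := by
  exact ((Real.hasDerivAt_exp x).sub_const 1).sub (hasDerivAt_id x)

private lemma F_mono : StrictMonoOn (fun t : ℝ => Real.exp t - 1 - t) (Set.Ici 0) := by
  apply strictMonoOn_of_deriv_pos (convex_Ici 0)
  · exact ((continuous_exp.sub continuous_const).sub continuous_id).continuousOn
  · intro x hx
    rw [interior_Ici] at hx
    have hx' : (0:ℝ) < x := hx
    rw [(F_hasDeriv x).deriv]
    have := Real.add_one_lt_exp (ne_of_gt hx')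
    linarith

private lemma h_pos {x : ℝ} (hx : 0 < x) : 0 < x * Real.exp x - Real.exp x + 1 := by
  have hmono : StrictMonoOn (fun t : ℝ => t * Real.exp t - Real.exp t + 1) (Set.Ici 0) := by
    apply strictMonoOn_of_deriv_pos (convex_Ici 0)
    · exact (((continuous_id.mul continuous_exp).sub continuous_exp).add
        continuous_const).continuousOn
    · intro t ht
      rw [interior_Ici] at ht
      have ht' : (0:ℝ) < t := ht
      have hd : HasDerivAt (fun t : ℝ => t * Real.exp t - Real.exp t + 1)
          (t * Real.exp t) t := by
        have h1 := ((hasDerivAt_id t).mul (Real.hasDerivAt_exp t)).sub (Real.hasDerivAt_exp t)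
        have h2 := h1.add_const 1
        exact h2.congr_deriv (by simp only [id_eq]; ring)
      rw [hd.deriv]
      exact mul_pos ht' (Real.exp_pos t)
  have h0 : (0:ℝ) ∈ Set.Ici (0:ℝ) := Set.self_mem_Ici
  have := hmono h0 (Set.mem_Ici.mpr (le_of_lt hx)) hx
  simpa using this

private lemma G_mono : StrictMonoOn (fun t : ℝ => (Real.exp t - 1 - t) / t) (Set.Ioi 0) := by
  apply strictMonoOn_of_deriv_pos (convex_Ioi 0)
  · exact ContinuousOn.div
      ((continuous_exp.sub continuous_const).sub continuous_id).continuousOn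
      continuous_id.continuousOn (fun t ht => ne_of_gt ht)
  · intro t ht
    rw [interior_Ioi] at ht
    have ht' : (0:ℝ) < t := ht
    have hd : HasDerivAt (fun t : ℝ => (Real.exp t - 1 - t) / t)
        (((Real.exp t - 1) * t - (Real.exp t - 1 - t) * 1) / t ^ 2) t :=
      (F_hasDeriv t).div (hasDerivAt_id t) (ne_of_gt ht')
    rw [hd.deriv]
    have h := h_pos ht'
    have heq : (Real.exp t - 1) * t - (Real.exp t - 1 - t) * 1
        = t * Real.exp t - Real.exp t + 1 := by ring
    rw [heq]
    exact div_pos h (by positivity)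

private lemma quad_le_exp {x : ℝ} (hx : 0 ≤ x) : 1 + x + x ^ 2 / 2 ≤ Real.exp x := by
  have h := Real.sum_le_exp_of_nonneg hx 3
  have he : ∑ i ∈ Finset.range 3, x ^ i / (Nat.factorial i : ℝ) = 1 + x + x ^ 2 / 2 := by
    simp [Finset.sum_range_succ, Nat.factorial]
  linarith [he ▸ h]

private lemma F_le {x : ℝ} (h0 : 0 < x) (h1 : x < 1) :
    Real.exp x - 1 - x ≤ x ^ 2 / (1 - x) := by
  have h2 : 1 - x ≤ Real.exp (-x) := by
    have := Real.add_one_le_exp (-x); linarith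
  have h3 : (1 - x) * Real.exp x ≤ 1 := by
    have h4 := mul_le_mul_of_nonneg_right h2 (le_of_lt (Real.exp_pos x))
    rwa [← Real.exp_add, neg_add_cancel, Real.exp_zero] at h4
  have hx1 : 0 < 1 - x := by linarith
  rw [le_div_iff₀ hx1]
  nlinarith [h3]

set_option maxHeartbeats 1600000 in
theorem stmt_9 (α K D H : ℝ) (hα : 0 < α) (hK : 0 < K) (hD : 0 < D) (hH : 0 < H)
    (a : ℝ → ℝ)
    (ha : ∀ g : ℝ, 0 < g → 0 < a g ∧
      α * K / D + g * H / α + g * H / D * a g = g * H / α * Real.exp (α * a g / D)) :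
    StrictMonoOn (fun g : ℝ => g * a g) (Set.Ioi 0) ∧
    Filter.Tendsto (fun g : ℝ => g * a g) (nhdsWithin 0 (Set.Ioi 0)) (nhds 0) ∧
    Filter.Tendsto (fun g : ℝ => g * a g) Filter.atTop Filter.atTop := by
  obtain ⟨c, hc_def, hc⟩ : ∃ c : ℝ, c = α ^ 2 * K / (H * D) ∧ 0 < c :=
    ⟨_, rfl, by positivity⟩
  -- Key reformulation: with x = α a g / D, exp x - 1 - x = c / g
  have key : ∀ g : ℝ, 0 < g → 0 < α * a g / D ∧
      Real.exp (α * a g / D) - 1 - α * a g / D = c / g := by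
    intro g hg
    obtain ⟨hag, heq⟩ := ha g hg
    refine ⟨by positivity, ?_⟩
    rw [hc_def]
    have hα' := hα.ne'
    have hD' := hD.ne'
    field_simp at heq
    have heq3 : (α * K * α + g * H * D) * D + g * H * a g * (D * α)
        = g * H * Real.exp (α * a g / D) * (D * D) := by
      apply mul_right_cancel₀ hα'
      linear_combination (α * D) * heq
    field_simp
    linear_combination (-1 : ℝ) * heq
  have prod_eq : ∀ g : ℝ, 0 < g → g * a g =
      (D * c / α) * ((α * a g / D) / (Real.exp (α * a g / D) - 1 - α * a g / D)) := by
    intro g hg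
    obtain ⟨hx, hF⟩ := key g hg
    rw [hF]
    field_simp [hα.ne', hD.ne', hg.ne', hc.ne']
  refine ⟨?_, ?_, ?_⟩
  · -- strict monotonicity
    intro g1 hg1 g2 hg2 h12
    simp only [Set.mem_Ioi] at hg1 hg2
    obtain ⟨hx1, hF1⟩ := key g1 hg1
    obtain ⟨hx2, hF2⟩ := key g2 hg2
    set x1 := α * a g1 / D with hx1def
    set x2 := α * a g2 / D with hx2def
    have hFlt : Real.exp x2 - 1 - x2 < Real.exp x1 - 1 - x1 := by
      rw [hF1, hF2]
      exact div_lt_div_of_pos_left hc hg1 h12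
    have hxlt : x2 < x1 := (F_mono.lt_iff_lt (le_of_lt hx2) (le_of_lt hx1)).mp hFlt
    have hG := G_mono (Set.mem_Ioi.mpr hx2) (Set.mem_Ioi.mpr hx1) hxlt
    simp only at hG
    have hFp1 : 0 < Real.exp x1 - 1 - x1 := by rw [hF1]; exact div_pos hc hg1
    have hFp2 : 0 < Real.exp x2 - 1 - x2 := by rw [hF2]; exact div_pos hc hg2
    have hmain : x1 / (Real.exp x1 - 1 - x1) < x2 / (Real.exp x2 - 1 - x2) := by
      rw [div_lt_div_iff₀ hFp1 hFp2]
      have h5 := (div_lt_div_iff₀ hx2 hx1).mp hG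
      nlinarith [h5]
    simp only
    rw [prod_eq g1 hg1, prod_eq g2 hg2]
    exact mul_lt_mul_of_pos_left hmain (by positivity)
  · -- limit 0 at 0+
    have hup : Filter.Tendsto (fun g : ℝ => (2 * D * c / α) / Real.log (c / g))
        (nhdsWithin 0 (Set.Ioi 0)) (nhds 0) := by
      have h1 : Filter.Tendsto (fun g : ℝ => c / g) (nhdsWithin 0 (Set.Ioi 0)) Filter.atTop := by
        have h2 := tendsto_inv_nhdsGT_zero (𝕜 := ℝ)
        have h3 := h2.const_mul_atTop hc
        simpa [div_eq_mul_inv] using h3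
      have h4 : Filter.Tendsto (fun g : ℝ => Real.log (c / g))
          (nhdsWithin 0 (Set.Ioi 0)) Filter.atTop := Real.tendsto_log_atTop.comp h1
      exact tendsto_const_nhds.div_atTop h4
    apply tendsto_of_tendsto_of_tendsto_of_le_of_le' tendsto_const_nhds hup
    · filter_upwards [self_mem_nhdsWithin] with g hg
      have hg0 : 0 < g := hg
      exact le_of_lt (mul_pos hg0 (ha g hg0).1)
    · filter_upwards [Ioo_mem_nhdsGT_of_mem (Set.left_mem_Ico.mpr hc)] with g hg
      obtain ⟨hg0, hgc⟩ := hg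
      obtain ⟨hx, hF⟩ := key g hg0
      set x := α * a g / D with hxdef
      have hFp : 0 < Real.exp x - 1 - x := by rw [hF]; exact div_pos hc hg0
      have hlogpos : 0 < Real.log (c / g) := Real.log_pos ((one_lt_div hg0).mpr hgc)
      have hlogx : Real.log (c / g) ≤ x := by
        rw [Real.log_le_iff_le_exp (div_pos hc hg0)]
        rw [← hF]
        linarith
      have hFq : x ^ 2 / 2 ≤ Real.exp x - 1 - x := by
        have := quad_le_exp (le_of_lt hx); linarith
      have h6 : x / (Real.exp x - 1 - x) ≤ 2 / x := by
        rw [div_le_div_iff₀ hFp hx]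
        nlinarith [hFq]
      have h7 : 2 / x ≤ 2 / Real.log (c / g) :=
        div_le_div_of_nonneg_left (by norm_num) hlogpos hlogx
      calc g * a g = (D * c / α) * (x / (Real.exp x - 1 - x)) := prod_eq g hg0
        _ ≤ (D * c / α) * (2 / Real.log (c / g)) := by
            apply mul_le_mul_of_nonneg_left (by linarith) (by positivity)
        _ = (2 * D * c / α) / Real.log (c / g) := by ring
  · -- limit ∞ at ∞
    rw [Filter.tendsto_atTop]
    intro b
    filter_upwards [Filter.eventually_ge_atTop
      (max (max 1 (8 * c)) (2 * α ^ 2 * b ^ 2 / (D ^ 2 * c)))] with g hg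
    have hg1 : (1:ℝ) ≤ g := le_trans (le_trans (le_max_left _ _) (le_max_left _ _)) hg
    have hg8 : 8 * c ≤ g := le_trans (le_trans (le_max_right _ _) (le_max_left _ _)) hg
    have hgb : 2 * α ^ 2 * b ^ 2 / (D ^ 2 * c) ≤ g := le_trans (le_max_right _ _) hg
    have hg0 : 0 < g := lt_of_lt_of_le one_pos hg1
    obtain ⟨hx, hF⟩ := key g hg0
    obtain ⟨x, hxdef⟩ : ∃ x : ℝ, α * a g / D = x := ⟨_, rfl⟩
    rw [hxdef] at hx hF
    have hFp : 0 < Real.exp x - 1 - x := by rw [hF]; exact div_pos hc hg0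
    have hFq : x ^ 2 / 2 ≤ Real.exp x - 1 - x := by
      have := quad_le_exp (le_of_lt hx); linarith
    have hx2 : x ^ 2 ≤ 2 * (c / g) := by rw [hF] at hFq; linarith
    have h2cg : 2 * (c / g) ≤ 1 / 4 := by
      have h2 : c / g ≤ 1 / 8 := by rw [div_le_iff₀ hg0]; linarith
      linarith
    have hxhalf : x ≤ 1 / 2 := by nlinarith [hx2, h2cg, sq_nonneg (x - 1/2)]
    have hFle : Real.exp x - 1 - x ≤ 2 * x ^ 2 := by
      have h8 := F_le hx (by linarith : x < 1)
      have h9 : x ^ 2 / (1 - x) ≤ 2 * x ^ 2 := by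
        rw [div_le_iff₀ (by linarith : (0:ℝ) < 1 - x)]
        nlinarith [sq_nonneg x]
      linarith
    have hxlb : c / g ≤ 2 * x ^ 2 := by rw [← hF]; exact hFle
    have h10 : c ≤ 2 * x ^ 2 * g := by rwa [div_le_iff₀ hg0] at hxlb
    have h11 : 2 * α ^ 2 * b ^ 2 ≤ g * (D ^ 2 * c) := by
      rwa [div_le_iff₀ (by positivity)] at hgb
    have hag' : a g = D * x / α := by rw [← hxdef]; field_simp
    have hP : g * a g = D / α * (g * x) := by rw [hag']; ring
    have hPpos : 0 < g * a g := mul_pos hg0 (ha g hg0).1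
    have h13 : D ^ 2 * g * c ≤ D ^ 2 * g * (2 * x ^ 2 * g) :=
      mul_le_mul_of_nonneg_left h10 (mul_nonneg (by positivity) hg0.le)
    have h12 : α ^ 2 * b ^ 2 ≤ D ^ 2 * (x ^ 2 * g ^ 2) := by linarith [h11, h13]
    have hPsq : b ^ 2 ≤ (g * a g) ^ 2 := by
      rw [hP]
      rw [div_mul_eq_mul_div, div_pow, le_div_iff₀ (by positivity)]
      linarith [h12]
    have habs : ∀ P : ℝ, 0 < P → b ^ 2 ≤ P ^ 2 → b ≤ P := by
      intro P h1 h2; nlinarith [h1, h2]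
    exact habs _ hPpos hPsq
end

section
/- Under the normalization in Lemma l9(b), for each g > 0 the values g and a_g are in bijective correspondence: for every a > 0 there is a unique g > 0 with a = a_g, and lim_{g→0⁺} a_g = ∞, lim_{g→∞} a_g = 0. -/
theorem stmt_11 (α K D H : ℝ) (hα : 0 < α) (hK : 0 < K) (hD : 0 < D) (hH : 0 < H)
    (a : ℝ → ℝ)
    (ha : ∀ g : ℝ, 0 < g → 0 < a g ∧
      α * K / D + g * H / α + g * H / D * a g = g * H / α * Real.exp (α * a g / D)) :
    (∀ b : ℝ, 0 < b → ∃! g : ℝ, 0 < g ∧ a g = b) ∧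
    Filter.Tendsto a (nhdsWithin 0 (Set.Ioi 0)) Filter.atTop ∧
    Filter.Tendsto a Filter.atTop (nhds 0) := by
  have hα' : α ≠ 0 := hα.ne'
  have hD' : D ≠ 0 := hD.ne'
  have hH' : H ≠ 0 := hH.ne'
  set F : ℝ → ℝ := fun x => Real.exp (α * x / D) - 1 - α * x / D with hF
  have hmono : StrictMonoOn F (Set.Ici 0) := by
    intro x hx y hy hxy
    simp only [hF]
    have hd : 0 < α * y / D - α * x / D := by
      have := (div_lt_div_iff_of_pos_right hD).2 (mul_lt_mul_of_pos_left hxy hα)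
      linarith
    have h1 : α * y / D - α * x / D + 1 < Real.exp (α * y / D - α * x / D) :=
      Real.add_one_lt_exp (ne_of_gt hd)
    have h2 : (1:ℝ) ≤ Real.exp (α * x / D) := Real.one_le_exp (div_nonneg (mul_nonneg hα.le hx) hD.le)
    have h3 : Real.exp (α * y / D) = Real.exp (α * x / D) * Real.exp (α * y / D - α * x / D) := by
      rw [← Real.exp_add]; ring_nf
    nlinarith [Real.exp_pos (α * y / D - α * x / D)]
  have hmo := hmono.monotoneOn
  have hF0 : F 0 = 0 := by simp [hF]
  have hFpos : ∀ x, 0 < x → 0 < F x := fun x hx => hF0 ▸ hmono (Set.mem_Ici.2 (le_refl (0:ℝ))) (le_of_lt hx) hx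
  have key : ∀ g, 0 < g → F (a g) = α ^ 2 * K / (g * H * D) := by
    intro g hg
    obtain ⟨hag, heq⟩ := ha g hg
    have hg' : g ≠ 0 := hg.ne'
    simp only [hF]
    field_simp at heq ⊢
    nlinarith [heq]
  refine ⟨?_, ?_, ?_⟩
  · intro b hb
    have hFb : 0 < F b := hFpos b hb
    refine ⟨α ^ 2 * K / (H * D * F b), ⟨by positivity, ?_⟩, ?_⟩
    · set g₀ := α ^ 2 * K / (H * D * F b) with hg₀
      have hg₀pos : 0 < g₀ := by positivity
      have h1 := key g₀ hg₀pos
      have h2 : α ^ 2 * K / (g₀ * H * D) = F b := by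
        rw [hg₀]; field_simp
      have h3 : F (a g₀) = F b := by rw [h1, h2]
      exact hmono.injOn (le_of_lt (ha g₀ hg₀pos).1) (le_of_lt hb) h3
    · rintro g ⟨hg, hab⟩
      have h1 := key g hg
      rw [hab] at h1
      rw [eq_div_iff (by positivity)]
      have h2 : F b * (g * H * D) = α ^ 2 * K := by
        rw [h1]; field_simp
      nlinarith [h2]
  · rw [Filter.tendsto_atTop]
    intro M
    set M' := max M 0 with hM'
    have hM'0 : (0:ℝ) ≤ M' := le_max_right _ _
    have hFM : 0 ≤ F M' := by
      rcases eq_or_lt_of_le hM'0 with h | h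
      · simp [← h, hF0]
      · exact le_of_lt (hFpos _ h)
    have hδ : 0 < α ^ 2 * K / (H * D * (F M' + 1)) := by positivity
    filter_upwards [Ioo_mem_nhdsGT_of_mem (⟨le_rfl, hδ⟩ :
        (0:ℝ) ∈ Set.Ico 0 (α ^ 2 * K / (H * D * (F M' + 1))))] with g hg
    obtain ⟨hg0, hgδ⟩ := hg
    have h1 := key g hg0
    have h2 : F M' + 1 < α ^ 2 * K / (g * H * D) := by
      rw [lt_div_iff₀ (by positivity)]
      rw [lt_div_iff₀ (by positivity)] at hgδ
      nlinarith [hgδ]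
    have h3 : F M' < F (a g) := by rw [h1]; linarith
    by_contra hcon
    push_neg at hcon
    have hle : a g ≤ M' := le_trans (le_of_lt hcon) (le_max_left M 0)
    have := hmo (le_of_lt (ha g hg0).1) hM'0 hle
    linarith
  · rw [tendsto_order]
    constructor
    · intro c hc
      filter_upwards [Filter.eventually_gt_atTop 0] with g hg
      exact lt_trans hc (ha g hg).1
    · intro c hc
      have hFc : 0 < F c := hFpos c hc
      filter_upwards [Filter.eventually_gt_atTop (max (α ^ 2 * K / (H * D * F c)) 0)] with g hg
      have hg0 : 0 < g := lt_of_le_of_lt (le_max_right _ _) hg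
      have hgc : α ^ 2 * K / (H * D * F c) < g := lt_of_le_of_lt (le_max_left _ _) hg
      have h1 := key g hg0
      have h2 : F (a g) < F c := by
        rw [h1, div_lt_iff₀ (by positivity)]
        rw [div_lt_iff₀ (by positivity)] at hgc
        nlinarith [hgc]
      by_contra hcon
      push_neg at hcon
      have := hmo (le_of_lt hc) (le_of_lt (ha g hg0).1) hcon
      linarith
end

section
/- Given αK < D and positive constants α, K, D, H, there exists a unique g_c > 0 such that αK + H·g_c·a_{g_c} = D, where a_g is the unique positive solution of (αK/D) + (gH/α) + (gH/D)a = (gH/α)e^{αa/D}. -/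
/-- Uniqueness of positive solutions of `exp x = 1 + c * x`. -/
lemma aux_exp_secant_unique {c x₁ x₂ : ℝ} (h1 : 0 < x₁) (h2 : 0 < x₂)
    (e1 : Real.exp x₁ = 1 + c * x₁) (e2 : Real.exp x₂ = 1 + c * x₂) : x₁ = x₂ := by
  have key : ∀ y z : ℝ, 0 < y → 0 < z → Real.exp y = 1 + c * y →
      Real.exp z = 1 + c * z → y < z → False := by
    intro y z hy hz ey ez hyz
    have hsec := strictConvexOn_exp.secant_strict_mono (a := 0)
      (Set.mem_univ _) (Set.mem_univ _) (Set.mem_univ _) hy.ne' hz.ne' hyz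
    rw [Real.exp_zero] at hsec
    have hy' : (Real.exp y - 1) / (y - 0) = c := by
      rw [ey, sub_zero, add_sub_cancel_left, mul_div_assoc, div_self hy.ne', mul_one]
    have hz' : (Real.exp z - 1) / (z - 0) = c := by
      rw [ez, sub_zero, add_sub_cancel_left, mul_div_assoc, div_self hz.ne', mul_one]
    rw [hy', hz'] at hsec
    exact lt_irrefl _ hsec
  rcases lt_trichotomy x₁ x₂ with h | h | h
  · exact absurd (key _ _ h1 h2 e1 e2 h) (fun f => f)
  · exact h
  · exact absurd (key _ _ h2 h1 e2 e1 h) (fun f => f)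

/-- Existence of a positive solution of `exp x = 1 + c * x` when `c > 1`. -/
lemma aux_exp_exists {c : ℝ} (hc : 1 < c) : ∃ x : ℝ, 0 < x ∧ Real.exp x = 1 + c * x := by
  have hc0 : 0 < c := lt_trans one_pos hc
  set x₀ : ℝ := (c - 1) / (2 * c) with hx₀def
  have hx₀pos : 0 < x₀ := div_pos (by linarith) (by linarith)
  have hx₀lt : x₀ < 1 := by
    rw [hx₀def, div_lt_one (by linarith)]; linarith
  set M : ℝ := 4 * c with hMdef
  set f : ℝ → ℝ := fun x => Real.exp x - 1 - c * x with hfdef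
  -- f x₀ < 0
  have hfx₀ : f x₀ < 0 := by
    have h1 : (1 : ℝ) - x₀ < Real.exp (-x₀) := by
      have := Real.add_one_lt_exp (x := -x₀) (by linarith)
      linarith
    have h2 : Real.exp x₀ * (1 - x₀) < 1 := by
      have := mul_lt_mul_of_pos_left h1 (Real.exp_pos x₀)
      rwa [← Real.exp_add, add_neg_cancel, Real.exp_zero] at this
    have h3 : Real.exp x₀ < 1 / (1 - x₀) := by
      rw [lt_div_iff₀ (by linarith)]; linarith
    have hcx : c * x₀ = (c - 1) / 2 := by
      rw [hx₀def]; field_simp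
    have h4 : 1 / (1 - x₀) < 1 + c * x₀ := by
      rw [div_lt_iff₀ (by linarith)]
      nlinarith
    simp only [hfdef]
    linarith
  -- f M > 0
  have hfM : 0 < f M := by
    have h1 : 1 + 2 * c ≤ Real.exp (2 * c) := by
      have := Real.add_one_le_exp (2 * c); linarith
    have h2 : Real.exp M = Real.exp (2 * c) ^ 2 := by
      rw [hMdef, show (4:ℝ) * c = 2 * c + 2 * c by ring, Real.exp_add, sq]
    simp only [hfdef]
    nlinarith [Real.exp_pos (2 * c)]
  have hx₀M : x₀ ≤ M := by nlinarith
  have hcont : ContinuousOn f (Set.Icc x₀ M) := by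
    apply Continuous.continuousOn
    simp only [hfdef]
    continuity
  have h0mem : (0 : ℝ) ∈ Set.Icc (f x₀) (f M) := ⟨le_of_lt hfx₀, le_of_lt hfM⟩
  obtain ⟨x, hxmem, hxeq⟩ := intermediate_value_Icc hx₀M hcont h0mem
  refine ⟨x, lt_of_lt_of_le hx₀pos hxmem.1, ?_⟩
  simp only [hfdef] at hxeq
  linarith

/-- Uniqueness of the positive solution `a` of the implicit equation, for fixed `g`. -/
lemma aux_a_unique {α K D H g a₁ a₂ : ℝ} (hα : 0 < α) (hK : 0 < K) (hD : 0 < D)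
    (hH : 0 < H) (hg : 0 < g) (h1 : 0 < a₁) (h2 : 0 < a₂)
    (e1 : α * K / D + g * H / α + g * H / D * a₁ = g * H / α * Real.exp (α * a₁ / D))
    (e2 : α * K / D + g * H / α + g * H / D * a₂ = g * H / α * Real.exp (α * a₂ / D)) :
    a₁ = a₂ := by
  have hmono : StrictMonoOn (fun y => Real.exp y - y) (Set.Ici (0 : ℝ)) := by
    apply strictMonoOn_of_deriv_pos (convex_Ici 0)
      ((Real.continuous_exp.sub continuous_id').continuousOn)
    intro x hx
    rw [interior_Ici] at hx
    have hd : deriv (fun y => Real.exp y - y) x = Real.exp x - 1 := by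
      have h := (Real.hasDerivAt_exp x).sub (hasDerivAt_id' (x := x))
      simpa using h.deriv
    rw [show (Real.exp - fun x => x) = fun y => Real.exp y - y from rfl, hd]
    have hx0 : 0 < x := hx
    have := Real.add_one_lt_exp (ne_of_gt hx0)
    linarith
  have hy1 : (0:ℝ) ≤ α * a₁ / D := le_of_lt (div_pos (mul_pos hα h1) hD)
  have hy2 : (0:ℝ) ≤ α * a₂ / D := le_of_lt (div_pos (mul_pos hα h2) hD)
  have hE1 : Real.exp (α * a₁ / D) = (α * K / D + g * H / α + g * H / D * a₁) * (α / (g * H)) := by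
    rw [e1]; field_simp
  have hE2 : Real.exp (α * a₂ / D) = (α * K / D + g * H / α + g * H / D * a₂) * (α / (g * H)) := by
    rw [e2]; field_simp
  have heq : Real.exp (α * a₁ / D) - α * a₁ / D = Real.exp (α * a₂ / D) - α * a₂ / D := by
    rw [hE1, hE2]
    field_simp [hα.ne', hD.ne', hg.ne', hH.ne']
    ring
  have h := hmono.injOn hy1 hy2 heq
  rw [div_eq_div_iff hD.ne' hD.ne'] at h
  have h' : α * a₁ = α * a₂ := mul_right_cancel₀ hD.ne' h
  exact mul_left_cancel₀ hα.ne' h'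

theorem stmt_12 (α K D H : ℝ) (hα : 0 < α) (hK : 0 < K) (hD : 0 < D) (hH : 0 < H)
    (hKD : α * K < D)
    (a : ℝ → ℝ)
    (ha : ∀ g : ℝ, 0 < g → 0 < a g ∧
      α * K / D + g * H / α + g * H / D * a g = g * H / α * Real.exp (α * a g / D)) :
    ∃! g : ℝ, 0 < g ∧ α * K + H * g * a g = D := by
  have hαK : 0 < α * K := mul_pos hα hK
  have hDK : 0 < D - α * K := by linarith
  set c : ℝ := D / (D - α * K) with hcdef
  have hc : 1 < c := (one_lt_div hDK).mpr (by linarith)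
  obtain ⟨x, hxpos, hxeq⟩ := aux_exp_exists hc
  set a0 : ℝ := D * x / α with ha0def
  have ha0pos : 0 < a0 := div_pos (mul_pos hD hxpos) hα
  set t : ℝ := (D - α * K) / H with htdef
  have htpos : 0 < t := div_pos hDK hH
  set g0 : ℝ := t / a0 with hg0def
  have hg0pos : 0 < g0 := div_pos htpos ha0pos
  have hxa0 : α * a0 / D = x := by
    rw [ha0def]
    field_simp [hα.ne', hD.ne']
  have hg0at : H * g0 * a0 = D - α * K := by
    rw [hg0def, htdef, ha0def]
    field_simp [hα.ne', hD.ne', hH.ne', hxpos.ne']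
  -- a0 satisfies the implicit equation for g0
  have hsol : α * K / D + g0 * H / α + g0 * H / D * a0 = g0 * H / α * Real.exp (α * a0 / D) := by
    rw [hxa0, hxeq, hg0def, htdef, ha0def, hcdef]
    field_simp [hα.ne', hD.ne', hH.ne', hxpos.ne', hDK.ne']
    ring
  have hag0 : a g0 = a0 := by
    obtain ⟨hp, he⟩ := ha g0 hg0pos
    exact aux_a_unique hα hK hD hH hg0pos hp ha0pos he hsol
  refine ⟨g0, ⟨hg0pos, ?_⟩, ?_⟩
  · rw [hag0]; linarith
  · rintro g ⟨hgpos, hgeq⟩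
    obtain ⟨hp, he⟩ := ha g hgpos
    have hgat : H * g * a g = D - α * K := by linarith
    -- derive exp x' = 1 + c x' for x' = α * a g / D
    have hx' : Real.exp (α * a g / D) = 1 + c * (α * a g / D) := by
      have hcx : c * (α * a g / D) = α / (H * g) := by
        rw [hcdef, div_mul_div_comm, div_eq_div_iff (by positivity) (by positivity)]
        linear_combination (D * α) * hgat
      have hterm : g * H / D * a g = (D - α * K) / D := by
        rw [← hgat]; ring
      rw [hterm] at he
      have hE : Real.exp (α * a g / D) = (α * K / D + g * H / α + (D - α * K) / D) * (α / (g * H)) := by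
        rw [he]; field_simp
      rw [hE, hcx]
      field_simp [hα.ne', hD.ne', hgpos.ne', hH.ne']
      ring
    have hxx : α * a g / D = x :=
      aux_exp_secant_unique (div_pos (mul_pos hα hp) hD) hxpos hx' hxeq
    have hag : a g = a0 := by
      have : α * a g = α * a0 := by
        rw [ha0def, ← hxx]
        field_simp [hα.ne', hD.ne']
      exact mul_left_cancel₀ hα.ne' this
    rw [hag] at hgat
    have h5 : H * g * a0 = H * g0 * a0 := by rw [hgat, hg0at]
    have h6 := mul_right_cancel₀ ha0pos.ne' h5
    exact mul_left_cancel₀ hH.ne' h6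
end
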